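/- Let m, n be non-negative integers, let μ be an (n|m)-hook partition (μ_{n+1} ≤ m), set ν := μ' and τ_j := ν_{m+j} for j ≥ 1. Then Σ_{i=1}^{m} ν_i(ν_i − 2(i−1)) − Σ_{j=1}^{n} τ'_j(τ'_j + 2(m−j)) = − Σ_{i≥1} μ_i(μ_i − 2i). -/
import Mathlib


/-- A partition: a weakly decreasing, eventually zero sequence of
non-negative integers. Here `l i` denotes the part `λ_{i+1}` (0-indexed). -/
def IsPartition (l : ℕ → ℕ) : Prop :=
  Antitone l ∧ ∃ N, ∀ i, N ≤ i → l i = 0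

/-- The conjugate partition: `conj l j` is `λ'_{j+1} = #{ i ≥ 1 : λ_i ≥ j+1 }`
(0-indexed). -/
noncomputable def conj (l : ℕ → ℕ) (j : ℕ) : ℕ :=
  Set.ncard {i : ℕ | j + 1 ≤ l i}

private lemma sum_odd (t : ℕ) : ∑ k ∈ Finset.range t, (2*(k:ℤ)+1) = (t:ℤ)^2 := by
  induction t with
  | zero => simp
  | succ t ih => rw [Finset.sum_range_succ, ih]; push_cast; ring

private lemma sum_lin (C : ℤ) (a : ℕ) :
    ∑ i ∈ Finset.range a, (C - 2*(i:ℤ)) = a*(C - a + 1) := by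
  induction a with
  | zero => simp
  | succ a ih => rw [Finset.sum_range_succ, ih]; push_cast; ring

private lemma lt_conj_iff {l : ℕ → ℕ} (hA : Antitone l) {N : ℕ}
    (hN : ∀ i, N ≤ i → l i = 0) (i j : ℕ) : i < conj l j ↔ j < l i := by
  have hfin : {i : ℕ | j + 1 ≤ l i}.Finite := by
    apply (Set.finite_Iio N).subset
    intro x hx
    simp only [Set.mem_setOf_eq] at hx
    simp only [Set.mem_Iio]
    by_contra hc
    push_neg at hc
    have := hN x hc
    omega
  constructor
  · intro h
    by_contra hc
    push_neg at hc
    have hsub : {i' : ℕ | j + 1 ≤ l i'} ⊆ ↑(Finset.range i) := by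
      intro x hx
      simp only [Set.mem_setOf_eq] at hx
      simp only [Finset.coe_range, Set.mem_Iio]
      by_contra hc2
      have := hA (show i ≤ x by omega)
      omega
    have := Set.ncard_le_ncard hsub (Finset.range i).finite_toSet
    rw [Set.ncard_coe_finset, Finset.card_range] at this
    unfold conj at h
    omega
  · intro h
    have hsub : ↑(Finset.range (i+1)) ⊆ {i' : ℕ | j + 1 ≤ l i'} := by
      intro x hx
      simp only [Finset.coe_range, Set.mem_Iio] at hx
      have := hA (show x ≤ i by omega)
      simp only [Set.mem_setOf_eq]
      omega
    have := Set.ncard_le_ncard hsub hfin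
    rw [Set.ncard_coe_finset, Finset.card_range] at this
    unfold conj
    omega

private lemma nat_eq_of_lt_iff {a b : ℕ} (h : ∀ k, k < a ↔ k < b) : a = b := by
  rcases lt_trichotomy a b with h' | h' | h'
  · exact absurd ((h a).mpr h') (lt_irrefl a)
  · exact h'
  · exact absurd ((h b).mp h') (lt_irrefl b)

/-- Case 2 (osp(2m|2n) versus c_∞) of Lemma 4.2.
Let μ be an (n|m)-hook partition, ν := μ', τ_j := ν_{m+j}. Then
Σ_{i=1}^{m} ν_i(ν_i − 2(i−1)) − Σ_{j=1}^{n} τ'_j(τ'_j + 2(m−j))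
  = − Σ_{i≥1} μ_i(μ_i − 2i). -/
theorem casimir_comparison_osp (m n : ℕ) (mu : ℕ → ℕ)
    (hmu : IsPartition mu) (hhook : mu n ≤ m) :
    ∑ i ∈ Finset.range m,
        (conj mu i : ℤ) * ((conj mu i : ℤ) - 2 * (i : ℤ)) -
      ∑ j ∈ Finset.range n,
        (conj (fun k => conj mu (m + k)) j : ℤ) *
          ((conj (fun k => conj mu (m + k)) j : ℤ) + 2 * ((m : ℤ) - ((j : ℤ) + 1))) =
      - ∑ᶠ i : ℕ, (mu i : ℤ) * ((mu i : ℤ) - 2 * ((i : ℤ) + 1)) := by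
  obtain ⟨hA, N₀, hN₀⟩ := hmu
  set N : ℕ := N₀ + m + n + mu 0 + 1 with hNdef
  have hN : ∀ i, N ≤ i → mu i = 0 := fun i hi => hN₀ i (by omega)
  have hdual : ∀ i j, i < conj mu j ↔ j < mu i := lt_conj_iff hA hN
  -- conj mu is antitone
  have hconjA : Antitone (conj mu) := by
    intro j j' hle
    by_contra hc
    push_neg at hc
    have h1 : j' < mu (conj mu j) := (hdual _ _).mp hc
    have h2 : j < mu (conj mu j) := by omega
    exact absurd ((hdual _ _).mpr h2) (lt_irrefl _)
  -- conj mu vanishes from mu 0 on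
  have hconj0 : ∀ j, mu 0 ≤ j → conj mu j = 0 := by
    intro j hj
    by_contra hc
    have : 0 < conj mu j := Nat.pos_of_ne_zero hc
    have := (hdual 0 j).mp this
    omega
  set τ : ℕ → ℕ := fun k => conj mu (m + k) with hτdef
  have hτA : Antitone τ := fun k k' h => hconjA (by omega)
  have hτ0 : ∀ k, mu 0 ≤ k → τ k = 0 := fun k hk => hconj0 _ (by omega)
  have hτdual : ∀ i j, i < conj τ j ↔ j < τ i := lt_conj_iff hτA hτ0
  -- conj τ j = mu j - m
  have hconjτ : ∀ j, conj τ j = mu j - m := by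
    intro j
    apply nat_eq_of_lt_iff
    intro k
    rw [hτdual k j]
    show j < conj mu (m + k) ↔ k < mu j - m
    rw [hdual j (m + k)]
    omega
  have hconjτ' : ∀ j, conj τ j = mu j - m := hconjτ
  -- replace the τ'-sum
  have hS2 : ∀ j, (conj (fun k => conj mu (m + k)) j : ℤ) = ((mu j - m : ℕ) : ℤ) := by
    intro j; rw [show (fun k => conj mu (m + k)) = τ from rfl, hconjτ j]
  -- conj mu j ≤ N
  have hconjle : ∀ j, conj mu j ≤ N := by
    intro j
    by_contra hc
    push_neg at hc
    have := (hdual N j).mp (by omega)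
    rw [hN N le_rfl] at this
    omega
  -- filter description of conj
  have hfilter : ∀ j, (Finset.range N).filter (fun k => j < mu k) = Finset.range (conj mu j) := by
    intro j
    ext k
    simp only [Finset.mem_filter, Finset.mem_range]
    constructor
    · rintro ⟨_, hk⟩
      exact (hdual k j).mpr hk
    · intro hk
      exact ⟨lt_of_lt_of_le hk (hconjle j), (hdual k j).mp hk⟩
  -- (conj mu j : ℤ) as indicator sum
  have hc1 : ∀ j, (conj mu j : ℤ) = ∑ k ∈ Finset.range N, (if j < mu k then (1:ℤ) else 0) := by
    intro j
    rw [← Finset.sum_filter, hfilter j]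
    simp
  have hc2 : ∀ j, (conj mu j : ℤ)^2
      = ∑ k ∈ Finset.range N, (if j < mu k then (2*(k:ℤ)+1) else 0) := by
    intro j
    rw [← Finset.sum_filter, hfilter j, sum_odd]
  -- the first sum, rewritten
  have hS1 : ∑ i ∈ Finset.range m, (conj mu i : ℤ) * ((conj mu i : ℤ) - 2 * (i : ℤ))
      = ∑ k ∈ Finset.range N,
          (((min m (mu k) : ℕ) : ℤ) * (2*(k:ℤ) + 2 - ((min m (mu k) : ℕ) : ℤ))) := by
    have step1 : ∀ i, (conj mu i : ℤ) * ((conj mu i : ℤ) - 2 * (i : ℤ))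
        = ∑ k ∈ Finset.range N, (if i < mu k then (2*(k:ℤ)+1 - 2*(i:ℤ)) else 0) := by
      intro i
      have : (conj mu i : ℤ) * ((conj mu i : ℤ) - 2 * (i : ℤ))
          = (conj mu i : ℤ)^2 - 2*(i:ℤ) * (conj mu i : ℤ) := by ring
      rw [this, hc2 i, hc1 i, Finset.mul_sum, ← Finset.sum_sub_distrib]
      apply Finset.sum_congr rfl
      intro k _
      by_cases h : i < mu k <;> simp [h]
    calc ∑ i ∈ Finset.range m, (conj mu i : ℤ) * ((conj mu i : ℤ) - 2 * (i : ℤ))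
        = ∑ i ∈ Finset.range m, ∑ k ∈ Finset.range N,
            (if i < mu k then (2*(k:ℤ)+1 - 2*(i:ℤ)) else 0) := by
          exact Finset.sum_congr rfl fun i _ => step1 i
      _ = ∑ k ∈ Finset.range N, ∑ i ∈ Finset.range m,
            (if i < mu k then (2*(k:ℤ)+1 - 2*(i:ℤ)) else 0) := Finset.sum_comm
      _ = ∑ k ∈ Finset.range N,
            (((min m (mu k) : ℕ) : ℤ) * (2*(k:ℤ) + 2 - ((min m (mu k) : ℕ) : ℤ))) := by
          apply Finset.sum_congr rfl
          intro k _
          rw [← Finset.sum_filter]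
          have hf : (Finset.range m).filter (fun i => i < mu k)
              = Finset.range (min m (mu k)) := by
            ext i
            simp only [Finset.mem_filter, Finset.mem_range, lt_min_iff]
          rw [hf]
          have := sum_lin (2*(k:ℤ)+1) (min m (mu k))
          rw [this]
          ring
  rw [hS1]
  -- rewrite τ'-sum with t j = mu j - m and extend to range N
  have hS2' : ∑ j ∈ Finset.range n,
        (conj (fun k => conj mu (m + k)) j : ℤ) *
          ((conj (fun k => conj mu (m + k)) j : ℤ) + 2 * ((m : ℤ) - ((j : ℤ) + 1)))
      = ∑ j ∈ Finset.range N,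
          ((mu j - m : ℕ) : ℤ) * (((mu j - m : ℕ) : ℤ) + 2 * ((m : ℤ) - ((j : ℤ) + 1))) := by
    rw [Finset.sum_congr rfl (fun j _ => by rw [hS2 j])]
    apply Finset.sum_subset
    · apply Finset.range_subset_range.mpr; omega
    · intro j _ hj
      simp only [Finset.mem_range, not_lt] at hj
      have : mu j ≤ m := le_trans (hA hj) hhook
      rw [Nat.sub_eq_zero_of_le this]
      simp
  rw [hS2']
  -- rewrite the finsum
  have hfin : ∑ᶠ i : ℕ, (mu i : ℤ) * ((mu i : ℤ) - 2 * ((i : ℤ) + 1))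
      = ∑ i ∈ Finset.range N, (mu i : ℤ) * ((mu i : ℤ) - 2 * ((i : ℤ) + 1)) := by
    apply finsum_eq_sum_of_support_subset
    intro i hi
    simp only [Function.mem_support] at hi
    simp only [Finset.coe_range, Set.mem_Iio]
    by_contra hc
    rw [hN i (by omega)] at hi
    simp at hi
  rw [hfin, ← Finset.sum_neg_distrib, ← Finset.sum_sub_distrib]
  apply Finset.sum_congr rfl
  intro k _
  rcases le_or_gt (mu k) m with h | h
  · rw [min_eq_right h, Nat.sub_eq_zero_of_le h]
    push_cast
    ring
  · rw [min_eq_left h.le, Nat.cast_sub h.le]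
    ring
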